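/- The Smarandache–Pătrașcu theorem of orthohomological triangles: Let A, B, C be affinely independent points in the Euclidean plane and let P₁, P₂ be points in the interior of triangle ABC such that ∠ B A P₁ = ∠ C A P₂, ∠ C B P₁ = ∠ A B P₂, and ∠ A C P₁ = ∠ B C P₂ (P₁ and P₂ are isogonal conjugates). For i = 1, 2 let Aᵢ, Bᵢ, Cᵢ be the orthogonal projections of Pᵢ onto the lines BC, CA, AB respectively (the pedal triangles of P₁ and P₂). If the lines AA₁, BB₁, CC₁ have a common point (triangles ABC and A₁B₁C₁ are homological), then the lines AA₂, BB₂, CC₂ also have a common point (triangles ABC and A₂B₂C₂ are homological). -/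

import Mathlib

set_option maxHeartbeats 4000000

open EuclideanGeometry RealInnerProductSpace


private lemma inner2 (x y : EuclideanSpace ℝ (Fin 2)) :
    ⟪x, y⟫ = x 0 * y 0 + x 1 * y 1 := by
  simp [PiLp.inner_apply, Fin.sum_univ_two, RCLike.inner_apply]
  ring

private lemma mem_line_iff {p₁ p₂ X : EuclideanSpace ℝ (Fin 2)} :
    X ∈ line[ℝ, p₁, p₂] ↔ ∃ r : ℝ, r • (p₂ - p₁) = X - p₁ := by
  rw [← vsub_vadd X p₁, vadd_left_mem_affineSpan_pair]
  simp [vsub_eq_sub]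

private lemma det_ne_zero {A B C : EuclideanSpace ℝ (Fin 2)}
    (h : AffineIndependent ℝ ![A, B, C]) :
    (B 0 - A 0) * (C 1 - A 1) - (B 1 - A 1) * (C 0 - A 0) ≠ 0 := by
  intro hD
  rw [affineIndependent_iff_not_collinear_set] at h
  apply h
  by_cases hB : B 0 = A 0 ∧ B 1 = A 1
  · have hBA : B = A := by
      ext i
      fin_cases i
      · exact hB.1
      · exact hB.2
    rw [hBA, Set.insert_idem]
    exact collinear_pair ℝ A C
  · rw [collinear_iff_of_mem (Set.mem_insert A {B, C})]
    refine ⟨B - A, ?_⟩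
    intro p hp
    simp only [Set.mem_insert_iff, Set.mem_singleton_iff] at hp
    rcases hp with rfl | rfl | rfl
    · exact ⟨0, by simp⟩
    · refine ⟨1, ?_⟩
      ext i
      simp [vadd_eq_add]
    · by_cases h0 : B 0 = A 0
      · have h1 : B 1 ≠ A 1 := fun hh => hB ⟨h0, hh⟩
        have hb1 : B 1 - A 1 ≠ 0 := sub_ne_zero.mpr h1
        have hc0' : p 0 = A 0 := by
          have hc0 : (B 1 - A 1) * (p 0 - A 0) = 0 := by
            linear_combination -hD + (p 1 - A 1) * h0
          rcases mul_eq_zero.mp hc0 with h' | h'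
          · exact absurd h' hb1
          · linarith
        refine ⟨(p 1 - A 1) / (B 1 - A 1), ?_⟩
        have e0 : p 0 = (p 1 - A 1) / (B 1 - A 1) * (B 0 - A 0) + A 0 := by
          rw [h0]; simp [hc0']
        have e1 : p 1 = (p 1 - A 1) / (B 1 - A 1) * (B 1 - A 1) + A 1 := by
          field_simp
          ring
        ext i
        fin_cases i <;>
          simp only [vadd_eq_add, PiLp.add_apply, PiLp.smul_apply, PiLp.sub_apply, smul_eq_mul]
        · exact e0
        · exact e1
      · have hb0 : B 0 - A 0 ≠ 0 := sub_ne_zero.mpr h0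
        refine ⟨(p 0 - A 0) / (B 0 - A 0), ?_⟩
        have e0 : p 0 = (p 0 - A 0) / (B 0 - A 0) * (B 0 - A 0) + A 0 := by field_simp; ring
        have e1 : p 1 = (p 0 - A 0) / (B 0 - A 0) * (B 1 - A 1) + A 1 := by
          field_simp
          linear_combination hD
        ext i
        fin_cases i <;>
          simp only [vadd_eq_add, PiLp.add_apply, PiLp.smul_apply, PiLp.sub_apply, smul_eq_mul]
        · exact e0
        · exact e1

private lemma vertexG (u v w₁ w₂ : EuclideanSpace ℝ (Fin 2)) (s₁ t₁ s₂ t₂ : ℝ)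
    (hs₁ : 0 < s₁) (ht₁ : 0 < t₁) (hs₂ : 0 < s₂) (ht₂ : 0 < t₂)
    (hD : v 0 * u 1 - v 1 * u 0 ≠ 0)
    (hw₁ : w₁ = s₁ • v + t₁ • u) (hw₂ : w₂ = s₂ • v + t₂ • u)
    (hang : InnerProductGeometry.angle u w₁ = InnerProductGeometry.angle v w₂) :
    t₁ * t₂ * ((u 0)^2 + (u 1)^2) = s₁ * s₂ * ((v 0)^2 + (v 1)^2) := by
  have hu : u ≠ 0 := by rintro rfl; simp at hD
  have hv : v ≠ 0 := by rintro rfl; simp at hD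
  have hw1 : w₁ ≠ 0 := by
    intro h
    rw [h] at hw₁
    apply hD
    have h0 := congrArg (fun f : EuclideanSpace ℝ (Fin 2) => f 0) hw₁
    have h1 := congrArg (fun f : EuclideanSpace ℝ (Fin 2) => f 1) hw₁
    simp only [PiLp.zero_apply, PiLp.add_apply, PiLp.smul_apply, smul_eq_mul] at h0 h1
    have hkey : s₁ * (v 0 * u 1 - v 1 * u 0) = 0 := by
      linear_combination u 0 * h1 - u 1 * h0
    rcases mul_eq_zero.mp hkey with h' | h'
    · exact absurd h' hs₁.ne'
    · exact h'
  have hw2 : w₂ ≠ 0 := by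
    intro h
    rw [h] at hw₂
    apply hD
    have h0 := congrArg (fun f : EuclideanSpace ℝ (Fin 2) => f 0) hw₂
    have h1 := congrArg (fun f : EuclideanSpace ℝ (Fin 2) => f 1) hw₂
    simp only [PiLp.zero_apply, PiLp.add_apply, PiLp.smul_apply, smul_eq_mul] at h0 h1
    have hkey : s₂ * (v 0 * u 1 - v 1 * u 0) = 0 := by
      linear_combination u 0 * h1 - u 1 * h0
    rcases mul_eq_zero.mp hkey with h' | h'
    · exact absurd h' hs₂.ne'
    · exact h'
  have hnu : (0:ℝ) < ‖u‖ := norm_pos_iff.mpr hu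
  have hnv : (0:ℝ) < ‖v‖ := norm_pos_iff.mpr hv
  have hn1 : (0:ℝ) < ‖w₁‖ := norm_pos_iff.mpr hw1
  have hn2 : (0:ℝ) < ‖w₂‖ := norm_pos_iff.mpr hw2
  have hcos := congrArg Real.cos hang
  rw [InnerProductGeometry.cos_angle, InnerProductGeometry.cos_angle,
    div_eq_div_iff (by positivity) (by positivity)] at hcos
  have hrad1 : ⟪u, u⟫ * ⟪w₁, w₁⟫ - ⟪u, w₁⟫ * ⟪u, w₁⟫ = (s₁ * (v 0 * u 1 - v 1 * u 0))^2 := by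
    rw [hw₁]
    simp only [inner2, PiLp.add_apply, PiLp.smul_apply, smul_eq_mul]
    ring
  have hrad2 : ⟪v, v⟫ * ⟪w₂, w₂⟫ - ⟪v, w₂⟫ * ⟪v, w₂⟫ = (t₂ * (v 0 * u 1 - v 1 * u 0))^2 := by
    rw [hw₂]
    simp only [inner2, PiLp.add_apply, PiLp.smul_apply, smul_eq_mul]
    ring
  have e1 := InnerProductGeometry.sin_angle_mul_norm_mul_norm u w₁
  have e2 := InnerProductGeometry.sin_angle_mul_norm_mul_norm v w₂
  rw [hrad1, Real.sqrt_sq_eq_abs, abs_mul, abs_of_pos hs₁] at e1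
  rw [hrad2, Real.sqrt_sq_eq_abs, abs_mul, abs_of_pos ht₂] at e2
  rw [hang] at e1
  have E2 : s₁ * (‖v‖ * ‖w₂‖) = t₂ * (‖u‖ * ‖w₁‖) := by
    have habs : (0:ℝ) < |v 0 * u 1 - v 1 * u 0| := abs_pos.mpr hD
    apply mul_left_cancel₀ habs.ne'
    linear_combination (‖u‖ * ‖w₁‖) * e2 - (‖v‖ * ‖w₂‖) * e1
  have hew1 : ⟪u, w₁⟫ = s₁ * ⟪u, v⟫ + t₁ * ⟪u, u⟫ := by
    rw [hw₁]
    simp only [inner2, PiLp.add_apply, PiLp.smul_apply, smul_eq_mul]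
    ring
  have hew2 : ⟪v, w₂⟫ = s₂ * ⟪v, v⟫ + t₂ * ⟪u, v⟫ := by
    rw [hw₂]
    simp only [inner2, PiLp.add_apply, PiLp.smul_apply, smul_eq_mul]
    ring
  rw [hew1, hew2] at hcos
  have E3 : t₁ * ⟪u, u⟫ * (‖v‖ * ‖w₂‖) = s₂ * ⟪v, v⟫ * (‖u‖ * ‖w₁‖) := by
    linear_combination hcos - (inner ℝ u v : ℝ) * E2
  have final : t₁ * t₂ * ⟪u, u⟫ * (‖u‖ * ‖w₁‖) = s₁ * s₂ * ⟪v, v⟫ * (‖u‖ * ‖w₁‖) := by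
    linear_combination s₁ * E3 - t₁ * (inner ℝ u u : ℝ) * E2
  have hcan : (‖u‖ * ‖w₁‖) ≠ 0 := by positivity
  have final2 := mul_right_cancel₀ hcan final
  rw [inner2, inner2] at final2
  linear_combination final2


private lemma foot_extract (a0 a1 b0 b1 c0 c1 p0 p1 q0 q1 t al ga : ℝ)
    (hp0 : p0 = al*a0 + (1-al-ga)*b0 + ga*c0) (hp1 : p1 = al*a1 + (1-al-ga)*b1 + ga*c1)
    (hq0 : q0 - b0 = t*(c0-b0)) (hq1 : q1 - b1 = t*(c1-b1))
    (hperp : (p0-q0)*(c0-b0) + (p1-q1)*(c1-b1) = 0) :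
    t*((c0-b0)^2+(c1-b1)^2) = al*((a0-b0)*(c0-b0)+(a1-b1)*(c1-b1)) + ga*((c0-b0)^2+(c1-b1)^2) := by
  subst hp0 hp1
  have hq0' : q0 = b0 + t*(c0-b0) := by linarith
  have hq1' : q1 = b1 + t*(c1-b1) := by linarith
  subst hq0' hq1'
  linear_combination -hperp

private lemma cevaA_extract (a0 a1 b0 b1 c0 c1 p0 p1 q0 q1 s t : ℝ)
    (hD : (b0-a0)*(c1-a1) - (b1-a1)*(c0-a0) ≠ 0)
    (hq0 : q0 - b0 = t*(c0-b0)) (hq1 : q1 - b1 = t*(c1-b1))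
    (hl0 : p0 - a0 = s*(q0 - a0)) (hl1 : p1 - a1 = s*(q1 - a1)) :
    ((p0-a0)*(c1-a1) - (p1-a1)*(c0-a0))/((b0-a0)*(c1-a1) - (b1-a1)*(c0-a0)) = s*(1-t)
    ∧ ((b0-a0)*(p1-a1) - (b1-a1)*(p0-a0))/((b0-a0)*(c1-a1) - (b1-a1)*(c0-a0)) = s*t := by
  have hq0' : q0 = b0 + t*(c0-b0) := by linarith
  have hq1' : q1 = b1 + t*(c1-b1) := by linarith
  subst hq0' hq1'
  have hp0' : p0 = a0 + s*(b0 + t*(c0-b0) - a0) := by linarith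
  have hp1' : p1 = a1 + s*(b1 + t*(c1-b1) - a1) := by linarith
  subst hp0' hp1'
  constructor <;> (rw [div_eq_iff hD]; ring)

private lemma cevaB_extract (a0 a1 b0 b1 c0 c1 p0 p1 q0 q1 s t : ℝ)
    (hD : (b0-a0)*(c1-a1) - (b1-a1)*(c0-a0) ≠ 0)
    (hq0 : q0 - c0 = t*(a0-c0)) (hq1 : q1 - c1 = t*(a1-c1))
    (hl0 : p0 - b0 = s*(q0 - b0)) (hl1 : p1 - b1 = s*(q1 - b1)) :
    ((b0-a0)*(p1-a1) - (b1-a1)*(p0-a0))/((b0-a0)*(c1-a1) - (b1-a1)*(c0-a0)) = s*(1-t)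
    ∧ 1 - ((p0-a0)*(c1-a1) - (p1-a1)*(c0-a0))/((b0-a0)*(c1-a1) - (b1-a1)*(c0-a0))
      - ((b0-a0)*(p1-a1) - (b1-a1)*(p0-a0))/((b0-a0)*(c1-a1) - (b1-a1)*(c0-a0)) = s*t := by
  have hq0' : q0 = c0 + t*(a0-c0) := by linarith
  have hq1' : q1 = c1 + t*(a1-c1) := by linarith
  subst hq0' hq1'
  have hp0' : p0 = b0 + s*(c0 + t*(a0-c0) - b0) := by linarith
  have hp1' : p1 = b1 + s*(c1 + t*(a1-c1) - b1) := by linarith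
  subst hp0' hp1'
  constructor
  · rw [div_eq_iff hD]; ring
  · rw [sub_sub, ← add_div, sub_eq_iff_eq_add', eq_comm, ← eq_sub_iff_add_eq, div_eq_iff hD]
    ring

private lemma cevaC_extract (a0 a1 b0 b1 c0 c1 p0 p1 q0 q1 s t : ℝ)
    (hD : (b0-a0)*(c1-a1) - (b1-a1)*(c0-a0) ≠ 0)
    (hq0 : q0 - a0 = t*(b0-a0)) (hq1 : q1 - a1 = t*(b1-a1))
    (hl0 : p0 - c0 = s*(q0 - c0)) (hl1 : p1 - c1 = s*(q1 - c1)) :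
    1 - ((p0-a0)*(c1-a1) - (p1-a1)*(c0-a0))/((b0-a0)*(c1-a1) - (b1-a1)*(c0-a0))
      - ((b0-a0)*(p1-a1) - (b1-a1)*(p0-a0))/((b0-a0)*(c1-a1) - (b1-a1)*(c0-a0)) = s*(1-t)
    ∧ ((p0-a0)*(c1-a1) - (p1-a1)*(c0-a0))/((b0-a0)*(c1-a1) - (b1-a1)*(c0-a0)) = s*t := by
  have hq0' : q0 = a0 + t*(b0-a0) := by linarith
  have hq1' : q1 = a1 + t*(b1-a1) := by linarith
  subst hq0' hq1'
  have hp0' : p0 = c0 + s*(a0 + t*(b0-a0) - c0) := by linarith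
  have hp1' : p1 = c1 + s*(a1 + t*(b1-a1) - c1) := by linarith
  subst hp0' hp1'
  constructor
  · field_simp
    ring
  · rw [div_eq_iff hD]; ring


private lemma pair_pos (a g q s c : ℝ) (ha : 0 < a) (hg : 0 < g) (hs : 0 < s) (hc : 0 < c)
    (hq : q^2 < s*c) : 0 < a*q + g*s ∨ 0 < a*c + g*q := by
  by_contra h
  push_neg at h
  obtain ⟨h1, h2⟩ := h
  have h1' : a*g*q + g^2*s ≤ 0 := by nlinarith [mul_nonpos_of_nonneg_of_nonpos hg.le h1]
  have h2' : a^2*c + a*g*q ≤ 0 := by nlinarith [mul_nonpos_of_nonneg_of_nonpos ha.le h2]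
  have key := mul_nonneg (neg_nonneg.2 h1') (neg_nonneg.2 h2')
  rw [neg_mul_neg] at key
  have hq' : (a*g*q)^2 < (g^2*s)*(a^2*c) := by
    nlinarith [mul_lt_mul_of_pos_left hq (show (0:ℝ) < a^2*g^2 by positivity)]
  have t1 := mul_le_mul_of_nonneg_right h1' (show (0:ℝ) ≤ a^2*c by positivity)
  have t2 := mul_le_mul_of_nonneg_right h2' (show (0:ℝ) ≤ g^2*s by positivity)
  nlinarith [key, hq', t1, t2]

private lemma ceva_core
    (a2 b2 c2 : ℝ) (ha : 0 < a2) (hb : 0 < b2) (hc : 0 < c2)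
    (U₁ U₁' V₁ V₁' W₁ W₁' U₂ U₂' V₂ V₂' W₂ W₂' x y z : ℝ)
    (hU2 : U₂ + U₂' = a2) (hV2 : V₂ + V₂' = b2) (hW2 : W₂ + W₂' = c2)
    (p1 : 0 < U₁ ∨ 0 < W₁') (p2 : 0 < V₁ ∨ 0 < U₁') (p3 : 0 < W₁ ∨ 0 < V₁')
    (q1 : 0 < U₂ ∨ 0 < W₂') (q2 : 0 < V₂ ∨ 0 < U₂') (q3 : 0 < W₂ ∨ 0 < V₂')
    (hKB : U₁*U₂*c2 = W₁'*W₂'*a2) (hKC : V₁*V₂*a2 = U₁'*U₂'*b2) (hKA : W₁*W₂*b2 = V₁'*V₂'*c2)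
    (hxyz : x + y + z = 1) (e1 : y*U₁ = z*U₁') (e2 : z*V₁ = x*V₁') (e3 : x*W₁ = y*W₁') :
    ∃ x' y' z' : ℝ, x' + y' + z' = 1 ∧ y'*U₂ = z'*U₂' ∧ z'*V₂ = x'*V₂' ∧ x'*W₂ = y'*W₂' := by
  have ceva1 : U₁*V₁*W₁ = U₁'*V₁'*W₁' := by
    by_cases hx : x = 0
    · subst hx
      simp only [zero_mul] at e2 e3
      by_cases hz : z = 0
      · have hy : y = 1 := by linarith
        have hW' : W₁' = 0 := by
          have := e3.symm; rw [hy] at this; linarith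
        have hU : U₁ = 0 := by
          have : y * U₁ = 0 := by rw [e1, hz]; ring
          rw [hy] at this; linarith
        rcases p1 with h | h <;> linarith
      · have hV : V₁ = 0 := by
          rcases mul_eq_zero.mp e2 with h | h
          · exact absurd h hz
          · exact h
        have hU' : 0 < U₁' := by
          rcases p2 with h | h
          · linarith
          · exact h
        by_cases hy : y = 0
        · exfalso
          rw [hy, zero_mul] at e1
          rcases mul_eq_zero.mp e1.symm with h | h
          · exact hz h
          · linarith
        · have hW' : W₁' = 0 := by
            rcases mul_eq_zero.mp e3.symm with h | h
            · exact absurd h hy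
            · exact h
          rw [hV, hW']; ring
    · by_cases hy : y = 0
      · subst hy
        simp only [zero_mul] at e1 e3
        have hW : W₁ = 0 := by
          rcases mul_eq_zero.mp e3 with h | h
          · exact absurd h hx
          · exact h
        have hV' : 0 < V₁' := by
          rcases p3 with h | h
          · linarith
          · exact h
        by_cases hz : z = 0
        · exfalso
          rw [hz, zero_mul] at e2
          rcases mul_eq_zero.mp e2.symm with h | h
          · exact hx h
          · linarith
        · have hU' : U₁' = 0 := by
            rcases mul_eq_zero.mp e1.symm with h | h
            · exact absurd h hz
            · exact h
          rw [hW, hU']; ring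
      · by_cases hz : z = 0
        · subst hz
          simp only [zero_mul] at e1 e2
          have hU : U₁ = 0 := by
            rcases mul_eq_zero.mp e1 with h | h
            · exact absurd h hy
            · exact h
          have hV' : V₁' = 0 := by
            rcases mul_eq_zero.mp e2.symm with h | h
            · exact absurd h hx
            · exact h
          rw [hU, hV']; ring
        · have hmul : (y*U₁)*((z*V₁)*(x*W₁)) = (z*U₁')*((x*V₁')*(y*W₁')) := by
            rw [e1, e2, e3]
          have hxyz0 : x*y*z ≠ 0 := by
            simp [hx, hy, hz]
          apply mul_left_cancel₀ hxyz0
          linear_combination hmul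
  have cevaBoth : (U₁*V₁*W₁)*(U₂*V₂*W₂) = (U₁'*V₁'*W₁')*(U₂'*V₂'*W₂') := by
    have h : (U₁*U₂*c2)*((V₁*V₂*a2)*(W₁*W₂*b2)) = (W₁'*W₂'*a2)*((U₁'*U₂'*b2)*(V₁'*V₂'*c2)) := by
      rw [hKB, hKC, hKA]
    have habc : a2*b2*c2 ≠ 0 := by positivity
    apply mul_right_cancel₀ habc
    linear_combination h
  have ceva2 : U₂*V₂*W₂ = U₂'*V₂'*W₂' := by
    by_cases hL : U₁*V₁*W₁ = 0
    · have hM : U₁'*V₁'*W₁' = 0 := ceva1 ▸ hL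
      have ha' := ha.ne'
      have hb' := hb.ne'
      have hc' := hc.ne'
      rcases mul_eq_zero.mp hL with hL2 | hW0
      · rcases mul_eq_zero.mp hL2 with hU0 | hV0
        · -- U₁ = 0
          have hW1' : 0 < W₁' := by rcases p1 with h | h <;> [linarith; exact h]
          have hW2' : W₂' = 0 := by
            have : W₁'*W₂'*a2 = 0 := by rw [← hKB, hU0]; ring
            rcases mul_eq_zero.mp this with h | h
            · rcases mul_eq_zero.mp h with h' | h'
              · linarith
              · exact h'
            · exact absurd h ha'
          rcases mul_eq_zero.mp hM with hM2 | hW1'0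
          · rcases mul_eq_zero.mp hM2 with hU1'0 | hV1'0
            · have hV1 : 0 < V₁ := by rcases p2 with h | h <;> [exact h; linarith]
              have hV20 : V₂ = 0 := by
                have : V₁*V₂*a2 = 0 := by rw [hKC, hU1'0]; ring
                rcases mul_eq_zero.mp this with h | h
                · rcases mul_eq_zero.mp h with h' | h'
                  · linarith
                  · exact h'
                · exact absurd h ha'
              rw [hV20, hW2']; ring
            · have hW1 : 0 < W₁ := by rcases p3 with h | h <;> [exact h; linarith]
              have hW20 : W₂ = 0 := by
                have : W₁*W₂*b2 = 0 := by rw [hKA, hV1'0]; ring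
                rcases mul_eq_zero.mp this with h | h
                · rcases mul_eq_zero.mp h with h' | h'
                  · linarith
                  · exact h'
                · exact absurd h hb'
              rw [hW20, hW2']; ring
          · linarith
        · -- V₁ = 0
          have hU1' : 0 < U₁' := by rcases p2 with h | h <;> [linarith; exact h]
          have hU2'0 : U₂' = 0 := by
            have : U₁'*U₂'*b2 = 0 := by rw [← hKC, hV0]; ring
            rcases mul_eq_zero.mp this with h | h
            · rcases mul_eq_zero.mp h with h' | h'
              · linarith
              · exact h'
            · exact absurd h hb'
          rcases mul_eq_zero.mp hM with hM2 | hW1'0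
          · rcases mul_eq_zero.mp hM2 with hU1'0 | hV1'0
            · linarith
            · have hW1 : 0 < W₁ := by rcases p3 with h | h <;> [exact h; linarith]
              have hW20 : W₂ = 0 := by
                have : W₁*W₂*b2 = 0 := by rw [hKA, hV1'0]; ring
                rcases mul_eq_zero.mp this with h | h
                · rcases mul_eq_zero.mp h with h' | h'
                  · linarith
                  · exact h'
                · exact absurd h hb'
              rw [hW20, hU2'0]; ring
          · have hU1 : 0 < U₁ := by rcases p1 with h | h <;> [exact h; linarith]
            have hU20 : U₂ = 0 := by
              have : U₁*U₂*c2 = 0 := by rw [hKB, hW1'0]; ring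
              rcases mul_eq_zero.mp this with h | h
              · rcases mul_eq_zero.mp h with h' | h'
                · linarith
                · exact h'
              · exact absurd h hc'
            rw [hU20, hU2'0]; ring
      · -- W₁ = 0
        have hV1' : 0 < V₁' := by rcases p3 with h | h <;> [linarith; exact h]
        have hV2'0 : V₂' = 0 := by
          have : V₁'*V₂'*c2 = 0 := by rw [← hKA, hW0]; ring
          rcases mul_eq_zero.mp this with h | h
          · rcases mul_eq_zero.mp h with h' | h'
            · linarith
            · exact h'
          · exact absurd h hc'
        rcases mul_eq_zero.mp hM with hM2 | hW1'0
        · rcases mul_eq_zero.mp hM2 with hU1'0 | hV1'0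
          · have hV1 : 0 < V₁ := by rcases p2 with h | h <;> [exact h; linarith]
            have hV20 : V₂ = 0 := by
              have : V₁*V₂*a2 = 0 := by rw [hKC, hU1'0]; ring
              rcases mul_eq_zero.mp this with h | h
              · rcases mul_eq_zero.mp h with h' | h'
                · linarith
                · exact h'
              · exact absurd h ha'
            rw [hV20, hV2'0]; ring
          · linarith
        · have hU1 : 0 < U₁ := by rcases p1 with h | h <;> [exact h; linarith]
          have hU20 : U₂ = 0 := by
            have : U₁*U₂*c2 = 0 := by rw [hKB, hW1'0]; ring
            rcases mul_eq_zero.mp this with h | h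
            · rcases mul_eq_zero.mp h with h' | h'
              · linarith
              · exact h'
            · exact absurd h hc'
          rw [hU20, hV2'0]; ring
    · rw [← ceva1] at cevaBoth
      exact mul_left_cancel₀ hL cevaBoth
  -- existence of the concurrency point for the second pedal triangle
  by_cases h1 : U₂*V₂ + U₂'*V₂' + U₂*V₂' = 0
  · by_cases h2 : V₂*W₂' + V₂*W₂ + V₂'*W₂' = 0
    · by_cases h3 : W₂'*U₂' + W₂*U₂' + W₂*U₂ = 0
      · exfalso
        have hVU : V₂*U₂' = a2*b2 := by linear_combination (V₂+V₂')*hU2 + a2*hV2 - h1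
        have hWV : W₂*V₂' = b2*c2 := by linear_combination (W₂+W₂')*hV2 + b2*hW2 - h2
        have hUW : U₂*W₂' = c2*a2 := by linear_combination (U₂+U₂')*hW2 + c2*hU2 - h3
        have hV2pos : 0 < V₂ := by
          rcases q2 with h | h
          · exact h
          · by_contra hcon
            push_neg at hcon
            nlinarith [mul_pos ha hb, mul_nonpos_of_nonpos_of_nonneg hcon h.le]
        have hU2'pos : 0 < U₂' := by
          by_contra hcon
          push_neg at hcon
          nlinarith [mul_pos ha hb, mul_nonpos_of_nonneg_of_nonpos hV2pos.le hcon]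
        have hW2pos : 0 < W₂ := by
          rcases q3 with h | h
          · exact h
          · by_contra hcon
            push_neg at hcon
            nlinarith [mul_pos hb hc, mul_nonpos_of_nonpos_of_nonneg hcon h.le]
        have hV2'pos : 0 < V₂' := by
          by_contra hcon
          push_neg at hcon
          nlinarith [mul_pos hb hc, mul_nonpos_of_nonneg_of_nonpos hW2pos.le hcon]
        have hU2pos : 0 < U₂ := by
          rcases q1 with h | h
          · exact h
          · by_contra hcon
            push_neg at hcon
            nlinarith [mul_pos hc ha, mul_nonpos_of_nonpos_of_nonneg hcon h.le]
        have hW2'pos : 0 < W₂' := by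
          by_contra hcon
          push_neg at hcon
          nlinarith [mul_pos hc ha, mul_nonpos_of_nonneg_of_nonpos hU2pos.le hcon]
        nlinarith [mul_pos hU2pos hV2pos, mul_pos hU2'pos hV2'pos, mul_pos hU2pos hV2'pos, h1]
      · refine ⟨W₂'*U₂'/(W₂'*U₂' + W₂*U₂' + W₂*U₂), W₂*U₂'/(W₂'*U₂' + W₂*U₂' + W₂*U₂),
          W₂*U₂/(W₂'*U₂' + W₂*U₂' + W₂*U₂), by first | (rw [← add_div, ← add_div, div_self h3]) | (rw [div_mul_eq_mul_div, div_mul_eq_mul_div, div_left_inj' h3]; ring1) | (rw [div_mul_eq_mul_div, div_mul_eq_mul_div, div_left_inj' h3]; linear_combination ceva2), by first | (rw [← add_div, ← add_div, div_self h3]) | (rw [div_mul_eq_mul_div, div_mul_eq_mul_div, div_left_inj' h3]; ring1) | (rw [div_mul_eq_mul_div, div_mul_eq_mul_div, div_left_inj' h3]; linear_combination ceva2),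
          by first | (rw [← add_div, ← add_div, div_self h3]) | (rw [div_mul_eq_mul_div, div_mul_eq_mul_div, div_left_inj' h3]; ring1) | (rw [div_mul_eq_mul_div, div_mul_eq_mul_div, div_left_inj' h3]; linear_combination ceva2), by first | (rw [← add_div, ← add_div, div_self h3]) | (rw [div_mul_eq_mul_div, div_mul_eq_mul_div, div_left_inj' h3]; ring1) | (rw [div_mul_eq_mul_div, div_mul_eq_mul_div, div_left_inj' h3]; linear_combination ceva2)⟩
    · refine ⟨V₂*W₂'/(V₂*W₂' + V₂*W₂ + V₂'*W₂'), V₂*W₂/(V₂*W₂' + V₂*W₂ + V₂'*W₂'),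
        V₂'*W₂'/(V₂*W₂' + V₂*W₂ + V₂'*W₂'), by first | (rw [← add_div, ← add_div, div_self h2]) | (rw [div_mul_eq_mul_div, div_mul_eq_mul_div, div_left_inj' h2]; ring1) | (rw [div_mul_eq_mul_div, div_mul_eq_mul_div, div_left_inj' h2]; linear_combination ceva2), by first | (rw [← add_div, ← add_div, div_self h2]) | (rw [div_mul_eq_mul_div, div_mul_eq_mul_div, div_left_inj' h2]; ring1) | (rw [div_mul_eq_mul_div, div_mul_eq_mul_div, div_left_inj' h2]; linear_combination ceva2),
        by first | (rw [← add_div, ← add_div, div_self h2]) | (rw [div_mul_eq_mul_div, div_mul_eq_mul_div, div_left_inj' h2]; ring1) | (rw [div_mul_eq_mul_div, div_mul_eq_mul_div, div_left_inj' h2]; linear_combination ceva2), by first | (rw [← add_div, ← add_div, div_self h2]) | (rw [div_mul_eq_mul_div, div_mul_eq_mul_div, div_left_inj' h2]; ring1) | (rw [div_mul_eq_mul_div, div_mul_eq_mul_div, div_left_inj' h2]; linear_combination ceva2)⟩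
  · refine ⟨U₂*V₂/(U₂*V₂ + U₂'*V₂' + U₂*V₂'), U₂'*V₂'/(U₂*V₂ + U₂'*V₂' + U₂*V₂'),
      U₂*V₂'/(U₂*V₂ + U₂'*V₂' + U₂*V₂'), by first | (rw [← add_div, ← add_div, div_self h1]) | (rw [div_mul_eq_mul_div, div_mul_eq_mul_div, div_left_inj' h1]; ring1) | (rw [div_mul_eq_mul_div, div_mul_eq_mul_div, div_left_inj' h1]; linear_combination ceva2), by first | (rw [← add_div, ← add_div, div_self h1]) | (rw [div_mul_eq_mul_div, div_mul_eq_mul_div, div_left_inj' h1]; ring1) | (rw [div_mul_eq_mul_div, div_mul_eq_mul_div, div_left_inj' h1]; linear_combination ceva2),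
      by first | (rw [← add_div, ← add_div, div_self h1]) | (rw [div_mul_eq_mul_div, div_mul_eq_mul_div, div_left_inj' h1]; ring1) | (rw [div_mul_eq_mul_div, div_mul_eq_mul_div, div_left_inj' h1]; linear_combination ceva2), by first | (rw [← add_div, ← add_div, div_self h1]) | (rw [div_mul_eq_mul_div, div_mul_eq_mul_div, div_left_inj' h1]; ring1) | (rw [div_mul_eq_mul_div, div_mul_eq_mul_div, div_left_inj' h1]; linear_combination ceva2)⟩

/-- **The Smarandache–Pătrașcu theorem of orthohomological triangles.** If `P₁`, `P₂` are
isogonal conjugate points in the interior of triangle `ABC` with pedal triangles `A₁B₁C₁`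
and `A₂B₂C₂`, and triangles `ABC` and `A₁B₁C₁` are homological (the lines `AA₁`, `BB₁`,
`CC₁` are concurrent), then triangles `ABC` and `A₂B₂C₂` are also homological. -/
theorem smarandache_patrascu (A B C P₁ P₂ A₁ B₁ C₁ A₂ B₂ C₂ : EuclideanSpace ℝ (Fin 2))
    (hABC : AffineIndependent ℝ ![A, B, C])
    (hP₁ : ∃ α β γ : ℝ, 0 < α ∧ 0 < β ∧ 0 < γ ∧ α + β + γ = 1 ∧ α • A + β • B + γ • C = P₁)
    (hP₂ : ∃ α β γ : ℝ, 0 < α ∧ 0 < β ∧ 0 < γ ∧ α + β + γ = 1 ∧ α • A + β • B + γ • C = P₂)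
    (hisoA : ∠ B A P₁ = ∠ C A P₂) (hisoB : ∠ C B P₁ = ∠ A B P₂) (hisoC : ∠ A C P₁ = ∠ B C P₂)
    (hA₁ : A₁ ∈ line[ℝ, B, C]) (hA₁perp : ⟪P₁ - A₁, C - B⟫ = 0)
    (hB₁ : B₁ ∈ line[ℝ, C, A]) (hB₁perp : ⟪P₁ - B₁, A - C⟫ = 0)
    (hC₁ : C₁ ∈ line[ℝ, A, B]) (hC₁perp : ⟪P₁ - C₁, B - A⟫ = 0)
    (hA₂ : A₂ ∈ line[ℝ, B, C]) (hA₂perp : ⟪P₂ - A₂, C - B⟫ = 0)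
    (hB₂ : B₂ ∈ line[ℝ, C, A]) (hB₂perp : ⟪P₂ - B₂, A - C⟫ = 0)
    (hC₂ : C₂ ∈ line[ℝ, A, B]) (hC₂perp : ⟪P₂ - C₂, B - A⟫ = 0)
    (hconc : ∃ P, P ∈ line[ℝ, A, A₁] ∧ P ∈ line[ℝ, B, B₁] ∧ P ∈ line[ℝ, C, C₁]) :
    ∃ Q, Q ∈ line[ℝ, A, A₂] ∧ Q ∈ line[ℝ, B, B₂] ∧ Q ∈ line[ℝ, C, C₂] := by
  obtain ⟨α₁, β₁, γ₁, hα₁, hβ₁, hγ₁, hsum₁, hP₁e⟩ := hP₁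
  obtain ⟨α₂, β₂, γ₂, hα₂, hβ₂, hγ₂, hsum₂, hP₂e⟩ := hP₂
  have hP₁c : ∀ i : Fin 2, α₁ * A i + β₁ * B i + γ₁ * C i = P₁ i := by
    intro i
    have h := congrArg (fun f : EuclideanSpace ℝ (Fin 2) => f i) hP₁e
    simpa using h
  have hP₂c : ∀ i : Fin 2, α₂ * A i + β₂ * B i + γ₂ * C i = P₂ i := by
    intro i
    have h := congrArg (fun f : EuclideanSpace ℝ (Fin 2) => f i) hP₂e
    simpa using h
  have hD : ((B 0 - A 0)*(C 1 - A 1) - (B 1 - A 1)*(C 0 - A 0)) ≠ 0 := det_ne_zero hABC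
  have hD2 : (0:ℝ) < ((B 0 - A 0)*(C 1 - A 1) - (B 1 - A 1)*(C 0 - A 0))^2 := lt_of_le_of_ne (sq_nonneg _) (Ne.symm (pow_ne_zero 2 hD))
  have hQblt : ((A 0 - B 0)*(C 0 - B 0) + (A 1 - B 1)*(C 1 - B 1))^2 < ((C 0 - B 0)^2 + (C 1 - B 1)^2)*((B 0 - A 0)^2 + (B 1 - A 1)^2) := by nlinarith [hD2]
  have hRflt : ((B 0 - C 0)*(A 0 - C 0) + (B 1 - C 1)*(A 1 - C 1))^2 < ((A 0 - C 0)^2 + (A 1 - C 1)^2)*((C 0 - B 0)^2 + (C 1 - B 1)^2) := by nlinarith [hD2]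
  have hPflt : ((C 0 - A 0)*(B 0 - A 0) + (C 1 - A 1)*(B 1 - A 1))^2 < ((B 0 - A 0)^2 + (B 1 - A 1)^2)*((A 0 - C 0)^2 + (A 1 - C 1)^2) := by nlinarith [hD2]
  have hsa : (0:ℝ) < ((C 0 - B 0)^2 + (C 1 - B 1)^2) := by
    by_contra hcon
    push_neg at hcon
    nlinarith [hD2, mul_nonpos_of_nonpos_of_nonneg hcon (show (0:ℝ) ≤ ((B 0 - A 0)^2 + (B 1 - A 1)^2) by positivity),
      sq_nonneg ((A 0 - B 0)*(C 0 - B 0) + (A 1 - B 1)*(C 1 - B 1))]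
  have hsb : (0:ℝ) < ((A 0 - C 0)^2 + (A 1 - C 1)^2) := by
    by_contra hcon
    push_neg at hcon
    nlinarith [hD2, mul_nonpos_of_nonpos_of_nonneg hcon (show (0:ℝ) ≤ ((C 0 - B 0)^2 + (C 1 - B 1)^2) by positivity),
      sq_nonneg ((B 0 - C 0)*(A 0 - C 0) + (B 1 - C 1)*(A 1 - C 1))]
  have hsc : (0:ℝ) < ((B 0 - A 0)^2 + (B 1 - A 1)^2) := by
    by_contra hcon
    push_neg at hcon
    nlinarith [hD2, mul_nonpos_of_nonpos_of_nonneg hcon (show (0:ℝ) ≤ ((A 0 - C 0)^2 + (A 1 - C 1)^2) by positivity),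
      sq_nonneg ((C 0 - A 0)*(B 0 - A 0) + (C 1 - A 1)*(B 1 - A 1))]
  obtain ⟨sa, hsadef⟩ : ∃ t : ℝ, t = ((C 0 - B 0)^2 + (C 1 - B 1)^2) := ⟨_, rfl⟩
  obtain ⟨sb, hsbdef⟩ : ∃ t : ℝ, t = ((A 0 - C 0)^2 + (A 1 - C 1)^2) := ⟨_, rfl⟩
  obtain ⟨sc, hscdef⟩ : ∃ t : ℝ, t = ((B 0 - A 0)^2 + (B 1 - A 1)^2) := ⟨_, rfl⟩
  obtain ⟨Qb, hQbdef⟩ : ∃ t : ℝ, t = ((A 0 - B 0)*(C 0 - B 0) + (A 1 - B 1)*(C 1 - B 1)) := ⟨_, rfl⟩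
  obtain ⟨Rf, hRfdef⟩ : ∃ t : ℝ, t = ((B 0 - C 0)*(A 0 - C 0) + (B 1 - C 1)*(A 1 - C 1)) := ⟨_, rfl⟩
  obtain ⟨Pf, hPfdef⟩ : ∃ t : ℝ, t = ((C 0 - A 0)*(B 0 - A 0) + (C 1 - A 1)*(B 1 - A 1)) := ⟨_, rfl⟩
  rw [← hQbdef, ← hsadef, ← hscdef] at hQblt
  rw [← hRfdef, ← hsbdef, ← hsadef] at hRflt
  rw [← hPfdef, ← hscdef, ← hsbdef] at hPflt
  rw [← hsadef] at hsa
  rw [← hsbdef] at hsb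
  rw [← hscdef] at hsc
  have hQRs : Qb + Rf = sa := by rw [hsadef, hQbdef, hRfdef]; ring
  have hRPs : Rf + Pf = sb := by rw [hsbdef, hRfdef, hPfdef]; ring
  have hPQs : Pf + Qb = sc := by rw [hscdef, hPfdef, hQbdef]; ring
  -- feet of the perpendiculars
  obtain ⟨tA1, htA1v⟩ := mem_line_iff.mp hA₁
  obtain ⟨tB1, htB1v⟩ := mem_line_iff.mp hB₁
  obtain ⟨tC1, htC1v⟩ := mem_line_iff.mp hC₁
  obtain ⟨tA2, htA2v⟩ := mem_line_iff.mp hA₂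
  obtain ⟨tB2, htB2v⟩ := mem_line_iff.mp hB₂
  obtain ⟨tC2, htC2v⟩ := mem_line_iff.mp hC₂
  have htA1c : ∀ i : Fin 2, A₁ i - B i = tA1 * (C i - B i) := by
    intro i
    have h := congrArg (fun f : EuclideanSpace ℝ (Fin 2) => f i) htA1v
    simp only [PiLp.smul_apply, PiLp.sub_apply, smul_eq_mul] at h
    linear_combination -h
  have htB1c : ∀ i : Fin 2, B₁ i - C i = tB1 * (A i - C i) := by
    intro i
    have h := congrArg (fun f : EuclideanSpace ℝ (Fin 2) => f i) htB1v
    simp only [PiLp.smul_apply, PiLp.sub_apply, smul_eq_mul] at h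
    linear_combination -h
  have htC1c : ∀ i : Fin 2, C₁ i - A i = tC1 * (B i - A i) := by
    intro i
    have h := congrArg (fun f : EuclideanSpace ℝ (Fin 2) => f i) htC1v
    simp only [PiLp.smul_apply, PiLp.sub_apply, smul_eq_mul] at h
    linear_combination -h
  have htA2c : ∀ i : Fin 2, A₂ i - B i = tA2 * (C i - B i) := by
    intro i
    have h := congrArg (fun f : EuclideanSpace ℝ (Fin 2) => f i) htA2v
    simp only [PiLp.smul_apply, PiLp.sub_apply, smul_eq_mul] at h
    linear_combination -h
  have htB2c : ∀ i : Fin 2, B₂ i - C i = tB2 * (A i - C i) := by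
    intro i
    have h := congrArg (fun f : EuclideanSpace ℝ (Fin 2) => f i) htB2v
    simp only [PiLp.smul_apply, PiLp.sub_apply, smul_eq_mul] at h
    linear_combination -h
  have htC2c : ∀ i : Fin 2, C₂ i - A i = tC2 * (B i - A i) := by
    intro i
    have h := congrArg (fun f : EuclideanSpace ℝ (Fin 2) => f i) htC2v
    simp only [PiLp.smul_apply, PiLp.sub_apply, smul_eq_mul] at h
    linear_combination -h
  have hA₁p : (P₁ 0 - A₁ 0)*(C 0 - B 0) + (P₁ 1 - A₁ 1)*(C 1 - B 1) = 0 := by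
    have h := hA₁perp
    rw [inner2] at h
    simp only [PiLp.sub_apply] at h
    linear_combination h
  have hB₁p : (P₁ 0 - B₁ 0)*(A 0 - C 0) + (P₁ 1 - B₁ 1)*(A 1 - C 1) = 0 := by
    have h := hB₁perp
    rw [inner2] at h
    simp only [PiLp.sub_apply] at h
    linear_combination h
  have hC₁p : (P₁ 0 - C₁ 0)*(B 0 - A 0) + (P₁ 1 - C₁ 1)*(B 1 - A 1) = 0 := by
    have h := hC₁perp
    rw [inner2] at h
    simp only [PiLp.sub_apply] at h
    linear_combination h
  have hA₂p : (P₂ 0 - A₂ 0)*(C 0 - B 0) + (P₂ 1 - A₂ 1)*(C 1 - B 1) = 0 := by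
    have h := hA₂perp
    rw [inner2] at h
    simp only [PiLp.sub_apply] at h
    linear_combination h
  have hB₂p : (P₂ 0 - B₂ 0)*(A 0 - C 0) + (P₂ 1 - B₂ 1)*(A 1 - C 1) = 0 := by
    have h := hB₂perp
    rw [inner2] at h
    simp only [PiLp.sub_apply] at h
    linear_combination h
  have hC₂p : (P₂ 0 - C₂ 0)*(B 0 - A 0) + (P₂ 1 - C₂ 1)*(B 1 - A 1) = 0 := by
    have h := hC₂perp
    rw [inner2] at h
    simp only [PiLp.sub_apply] at h
    linear_combination h
  -- barycentric expansions
  have hpA1 : ∀ i : Fin 2, P₁ i = α₁*(A i) + (1-α₁-γ₁)*(B i) + γ₁*(C i) := by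
    intro i
    linear_combination -(hP₁c i) + (B i) * hsum₁
  have hpB1 : ∀ i : Fin 2, P₁ i = β₁*(B i) + (1-β₁-α₁)*(C i) + α₁*(A i) := by
    intro i
    linear_combination -(hP₁c i) + (C i) * hsum₁
  have hpC1 : ∀ i : Fin 2, P₁ i = γ₁*(C i) + (1-γ₁-β₁)*(A i) + β₁*(B i) := by
    intro i
    linear_combination -(hP₁c i) + (A i) * hsum₁
  have hpA2 : ∀ i : Fin 2, P₂ i = α₂*(A i) + (1-α₂-γ₂)*(B i) + γ₂*(C i) := by
    intro i
    linear_combination -(hP₂c i) + (B i) * hsum₂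
  have hpB2 : ∀ i : Fin 2, P₂ i = β₂*(B i) + (1-β₂-α₂)*(C i) + α₂*(A i) := by
    intro i
    linear_combination -(hP₂c i) + (C i) * hsum₂
  have hpC2 : ∀ i : Fin 2, P₂ i = γ₂*(C i) + (1-γ₂-β₂)*(A i) + β₂*(B i) := by
    intro i
    linear_combination -(hP₂c i) + (A i) * hsum₂
  -- foot equations
  have hU1f := foot_extract (A 0) (A 1) (B 0) (B 1) (C 0) (C 1) (P₁ 0) (P₁ 1) (A₁ 0) (A₁ 1)
    tA1 α₁ γ₁ (hpA1 0) (hpA1 1) (htA1c 0) (htA1c 1) hA₁p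
  have hV1f := foot_extract (B 0) (B 1) (C 0) (C 1) (A 0) (A 1) (P₁ 0) (P₁ 1) (B₁ 0) (B₁ 1)
    tB1 β₁ α₁ (hpB1 0) (hpB1 1) (htB1c 0) (htB1c 1) hB₁p
  have hW1f := foot_extract (C 0) (C 1) (A 0) (A 1) (B 0) (B 1) (P₁ 0) (P₁ 1) (C₁ 0) (C₁ 1)
    tC1 γ₁ β₁ (hpC1 0) (hpC1 1) (htC1c 0) (htC1c 1) hC₁p
  have hU2f := foot_extract (A 0) (A 1) (B 0) (B 1) (C 0) (C 1) (P₂ 0) (P₂ 1) (A₂ 0) (A₂ 1)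
    tA2 α₂ γ₂ (hpA2 0) (hpA2 1) (htA2c 0) (htA2c 1) hA₂p
  have hV2f := foot_extract (B 0) (B 1) (C 0) (C 1) (A 0) (A 1) (P₂ 0) (P₂ 1) (B₂ 0) (B₂ 1)
    tB2 β₂ α₂ (hpB2 0) (hpB2 1) (htB2c 0) (htB2c 1) hB₂p
  have hW2f := foot_extract (C 0) (C 1) (A 0) (A 1) (B 0) (B 1) (P₂ 0) (P₂ 1) (C₂ 0) (C₂ 1)
    tC2 γ₂ β₂ (hpC2 0) (hpC2 1) (htC2c 0) (htC2c 1) hC₂p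
  rw [← hsadef, ← hQbdef] at hU1f hU2f
  rw [← hsbdef, ← hRfdef] at hV1f hV2f
  rw [← hscdef, ← hPfdef] at hW1f hW2f
  -- sum identities
  have hU1s : (α₁*Qb + γ₁*sa) + (β₁*sa + α₁*Rf) = sa := by linear_combination α₁*hQRs + sa*hsum₁
  have hV1s : (β₁*Rf + α₁*sb) + (γ₁*sb + β₁*Pf) = sb := by linear_combination β₁*hRPs + sb*hsum₁
  have hW1s : (γ₁*Pf + β₁*sc) + (α₁*sc + γ₁*Qb) = sc := by linear_combination γ₁*hPQs + sc*hsum₁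
  have hU2s : (α₂*Qb + γ₂*sa) + (β₂*sa + α₂*Rf) = sa := by linear_combination α₂*hQRs + sa*hsum₂
  have hV2s : (β₂*Rf + α₂*sb) + (γ₂*sb + β₂*Pf) = sb := by linear_combination β₂*hRPs + sb*hsum₂
  have hW2s : (γ₂*Pf + β₂*sc) + (α₂*sc + γ₂*Qb) = sc := by linear_combination γ₂*hPQs + sc*hsum₂
  -- isogonality gives the key product identities
  have hw1B : P₁ - B = α₁ • (A - B) + γ₁ • (C - B) := by
    ext i
    simp only [PiLp.sub_apply, PiLp.add_apply, PiLp.smul_apply, smul_eq_mul]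
    linear_combination -(hP₁c i) + (B i) * hsum₁
  have hw2B : P₂ - B = α₂ • (A - B) + γ₂ • (C - B) := by
    ext i
    simp only [PiLp.sub_apply, PiLp.add_apply, PiLp.smul_apply, smul_eq_mul]
    linear_combination -(hP₂c i) + (B i) * hsum₂
  have hw1C : P₁ - C = β₁ • (B - C) + α₁ • (A - C) := by
    ext i
    simp only [PiLp.sub_apply, PiLp.add_apply, PiLp.smul_apply, smul_eq_mul]
    linear_combination -(hP₁c i) + (C i) * hsum₁
  have hw2C : P₂ - C = β₂ • (B - C) + α₂ • (A - C) := by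
    ext i
    simp only [PiLp.sub_apply, PiLp.add_apply, PiLp.smul_apply, smul_eq_mul]
    linear_combination -(hP₂c i) + (C i) * hsum₂
  have hDB : (A - B) 0 * (C - B) 1 - (A - B) 1 * (C - B) 0 ≠ 0 := by
    simp only [PiLp.sub_apply]
    intro h
    apply hD
    linear_combination -h
  have hDC : (B - C) 0 * (A - C) 1 - (B - C) 1 * (A - C) 0 ≠ 0 := by
    simp only [PiLp.sub_apply]
    intro h
    apply hD
    linear_combination -h
  have hangB : InnerProductGeometry.angle (C - B) (P₁ - B)
      = InnerProductGeometry.angle (A - B) (P₂ - B) := by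
    simpa only [EuclideanGeometry.angle, vsub_eq_sub] using hisoB
  have hangC : InnerProductGeometry.angle (A - C) (P₁ - C)
      = InnerProductGeometry.angle (B - C) (P₂ - C) := by
    simpa only [EuclideanGeometry.angle, vsub_eq_sub] using hisoC
  have hGB := vertexG (C - B) (A - B) (P₁ - B) (P₂ - B) α₁ γ₁ α₂ γ₂ hα₁ hγ₁ hα₂ hγ₂ hDB
    hw1B hw2B hangB
  have hGC := vertexG (A - C) (B - C) (P₁ - C) (P₂ - C) β₁ α₁ β₂ α₂ hβ₁ hα₁ hβ₂ hα₂ hDC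
    hw1C hw2C hangC
  simp only [PiLp.sub_apply] at hGB hGC
  have hGBc : γ₁*γ₂*sa = α₁*α₂*sc := by
    rw [hsadef, hscdef]
    linear_combination hGB
  have hGCc : α₁*α₂*sb = β₁*β₂*sa := by
    rw [hsbdef, hsadef]
    linear_combination hGC
  have hGA : β₁*β₂*sc = γ₁*γ₂*sb := by
    apply mul_left_cancel₀ hsa.ne'
    linear_combination (-sc)*hGCc - sb*hGBc
  -- transfer of the Ceva products
  have hKB : (α₁*Qb + γ₁*sa)*(α₂*Qb + γ₂*sa)*sc = (α₁*sc + γ₁*Qb)*(α₂*sc + γ₂*Qb)*sa := by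
    linear_combination (sa*sc - Qb^2)*hGBc
  have hKC : (β₁*Rf + α₁*sb)*(β₂*Rf + α₂*sb)*sa = (β₁*sa + α₁*Rf)*(β₂*sa + α₂*Rf)*sb := by
    linear_combination (sa*sb - Rf^2)*hGCc
  have hKA : (γ₁*Pf + β₁*sc)*(γ₂*Pf + β₂*sc)*sb = (γ₁*sb + β₁*Pf)*(γ₂*sb + β₂*Pf)*sc := by
    linear_combination (sb*sc - Pf^2)*hGA
  -- the given concurrency point
  obtain ⟨Pc, hcA, hcB, hcC⟩ := hconc
  obtain ⟨sA, hsAv⟩ := mem_line_iff.mp hcA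
  obtain ⟨sB, hsBv⟩ := mem_line_iff.mp hcB
  obtain ⟨sC, hsCv⟩ := mem_line_iff.mp hcC
  have hsAc : ∀ i : Fin 2, Pc i - A i = sA * (A₁ i - A i) := by
    intro i
    have h := congrArg (fun f : EuclideanSpace ℝ (Fin 2) => f i) hsAv
    simp only [PiLp.smul_apply, PiLp.sub_apply, smul_eq_mul] at h
    linear_combination -h
  have hsBc : ∀ i : Fin 2, Pc i - B i = sB * (B₁ i - B i) := by
    intro i
    have h := congrArg (fun f : EuclideanSpace ℝ (Fin 2) => f i) hsBv
    simp only [PiLp.smul_apply, PiLp.sub_apply, smul_eq_mul] at h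
    linear_combination -h
  have hsCc : ∀ i : Fin 2, Pc i - C i = sC * (C₁ i - C i) := by
    intro i
    have h := congrArg (fun f : EuclideanSpace ℝ (Fin 2) => f i) hsCv
    simp only [PiLp.smul_apply, PiLp.sub_apply, smul_eq_mul] at h
    linear_combination -h
  obtain ⟨Y, hYdef⟩ : ∃ t : ℝ, t = (((Pc 0 - A 0)*(C 1 - A 1) - (Pc 1 - A 1)*(C 0 - A 0))/((B 0 - A 0)*(C 1 - A 1) - (B 1 - A 1)*(C 0 - A 0))) := ⟨_, rfl⟩
  obtain ⟨Z, hZdef⟩ : ∃ t : ℝ, t = (((B 0 - A 0)*(Pc 1 - A 1) - (B 1 - A 1)*(Pc 0 - A 0))/((B 0 - A 0)*(C 1 - A 1) - (B 1 - A 1)*(C 0 - A 0))) := ⟨_, rfl⟩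
  have hYZA := cevaA_extract (A 0) (A 1) (B 0) (B 1) (C 0) (C 1) (Pc 0) (Pc 1) (A₁ 0) (A₁ 1)
    sA tA1 hD (htA1c 0) (htA1c 1) (hsAc 0) (hsAc 1)
  have hZXB := cevaB_extract (A 0) (A 1) (B 0) (B 1) (C 0) (C 1) (Pc 0) (Pc 1) (B₁ 0) (B₁ 1)
    sB tB1 hD (htB1c 0) (htB1c 1) (hsBc 0) (hsBc 1)
  have hXYC := cevaC_extract (A 0) (A 1) (B 0) (B 1) (C 0) (C 1) (Pc 0) (Pc 1) (C₁ 0) (C₁ 1)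
    sC tC1 hD (htC1c 0) (htC1c 1) (hsCc 0) (hsCc 1)
  have hY1 : Y = sA*(1-tA1) := by rw [hYdef]; exact hYZA.1
  have hZ1 : Z = sA*tA1 := by rw [hZdef]; exact hYZA.2
  have hZ2 : Z = sB*(1-tB1) := by rw [hZdef]; exact hZXB.1
  have hX2 : 1 - Y - Z = sB*tB1 := by rw [hYdef, hZdef]; exact hZXB.2
  have hX3 : 1 - Y - Z = sC*(1-tC1) := by rw [hYdef, hZdef]; exact hXYC.1
  have hY3 : Y = sC*tC1 := by rw [hYdef]; exact hXYC.2
  have e1 : Y*(α₁*Qb + γ₁*sa) = Z*(β₁*sa + α₁*Rf) := by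
    linear_combination (α₁*Qb + γ₁*sa)*hY1 - (β₁*sa + α₁*Rf)*hZ1 - sA*hU1f - sA*tA1*hU1s
  have e2 : Z*(β₁*Rf + α₁*sb) = (1 - Y - Z)*(γ₁*sb + β₁*Pf) := by
    linear_combination (β₁*Rf + α₁*sb)*hZ2 - (γ₁*sb + β₁*Pf)*hX2 - sB*hV1f - sB*tB1*hV1s
  have e3 : (1 - Y - Z)*(γ₁*Pf + β₁*sc) = Y*(α₁*sc + γ₁*Qb) := by
    linear_combination (γ₁*Pf + β₁*sc)*hX3 - (α₁*sc + γ₁*Qb)*hY3 - sC*hW1f - sC*tC1*hW1s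
  have hxyz : (1 - Y - Z) + Y + Z = 1 := by ring
  obtain ⟨x', y', z', hsum3, r1, r2, r3⟩ :=
    ceva_core sa sb sc hsa hsb hsc
      (α₁*Qb + γ₁*sa) (β₁*sa + α₁*Rf) (β₁*Rf + α₁*sb) (γ₁*sb + β₁*Pf) (γ₁*Pf + β₁*sc) (α₁*sc + γ₁*Qb)
      (α₂*Qb + γ₂*sa) (β₂*sa + α₂*Rf) (β₂*Rf + α₂*sb) (γ₂*sb + β₂*Pf) (γ₂*Pf + β₂*sc) (α₂*sc + γ₂*Qb)
      (1 - Y - Z) Y Z hU2s hV2s hW2s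
      (pair_pos α₁ γ₁ Qb sa sc hα₁ hγ₁ hsa hsc hQblt)
      (pair_pos β₁ α₁ Rf sb sa hβ₁ hα₁ hsb hsa hRflt)
      (pair_pos γ₁ β₁ Pf sc sb hγ₁ hβ₁ hsc hsb hPflt)
      (pair_pos α₂ γ₂ Qb sa sc hα₂ hγ₂ hsa hsc hQblt)
      (pair_pos β₂ α₂ Rf sb sa hβ₂ hα₂ hsb hsa hRflt)
      (pair_pos γ₂ β₂ Pf sc sb hγ₂ hβ₂ hsc hsb hPflt)
      hKB hKC hKA hxyz e1 e2 e3
  have hrelA : (y' + z') * tA2 = z' := by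
    apply mul_right_cancel₀ hsa.ne'
    linear_combination (y' + z')*hU2f + r1 + z'*hU2s
  have hrelB : (x' + z') * tB2 = x' := by
    apply mul_right_cancel₀ hsb.ne'
    linear_combination (x' + z')*hV2f + r2 + x'*hV2s
  have hrelC : (x' + y') * tC2 = y' := by
    apply mul_right_cancel₀ hsc.ne'
    linear_combination (x' + y')*hW2f + r3 + y'*hW2s
  refine ⟨x' • A + y' • B + z' • C, ?_, ?_, ?_⟩
  · rw [mem_line_iff]
    refine ⟨y' + z', ?_⟩
    ext i
    simp only [PiLp.sub_apply, PiLp.add_apply, PiLp.smul_apply, smul_eq_mul]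
    linear_combination (y' + z')*(htA2c i) + (C i - B i)*hrelA - (A i)*hsum3
  · rw [mem_line_iff]
    refine ⟨x' + z', ?_⟩
    ext i
    simp only [PiLp.sub_apply, PiLp.add_apply, PiLp.smul_apply, smul_eq_mul]
    linear_combination (x' + z')*(htB2c i) + (A i - C i)*hrelB - (B i)*hsum3
  · rw [mem_line_iff]
    refine ⟨x' + y', ?_⟩
    ext i
    simp only [PiLp.sub_apply, PiLp.add_apply, PiLp.smul_apply, smul_eq_mul]
    linear_combination (x' + y')*(htC2c i) + (B i - A i)*hrelC - (C i)*hsum3
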